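/- Let A_1, A_2 be symmetric n×n real matrices with rank([A_1,A_2]) = 2, and suppose they admit (n+1)×(n+1) symmetric commuting extensions, given by bordering with column vectors a, b and scalars α, β. Then the vectors a and b both lie in the image of [A_1,A_2], and a, b are linearly independent. -/
import Mathlib

open scoped Matrix

private lemma vecMulVec_mulVec' {n : ℕ} (u v w : Fin n → ℝ) :
    (Matrix.vecMulVec u v).mulVec w = (v ⬝ᵥ w) • u := by
  ext i
  simp [Matrix.vecMulVec, Matrix.mulVec, dotProduct, Finset.mul_sum, mul_comm,
    mul_left_comm]

/-- for symmetric A₁, A₂ with rank [A₁,A₂] = 2 admitting (n+1)×(n+1)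
symmetric commuting extensions (bordering vectors a, b, scalars α, β), both a and b
lie in the image of [A₁,A₂] and a, b are linearly independent. -/
theorem bordering_vectors_in_commutator_image (n : ℕ)
    (A₁ A₂ : Matrix (Fin n) (Fin n) ℝ)
    (h₁ : A₁.IsSymm) (h₂ : A₂.IsSymm)
    (hrank : (A₁ * A₂ - A₂ * A₁).rank = 2)
    (a b : Fin n → ℝ) (α β : ℝ)
    (heq1 : A₁ * A₂ - A₂ * A₁ + Matrix.vecMulVec a b - Matrix.vecMulVec b a = 0)
    (heq2 : A₁.mulVec b + β • a - A₂.mulVec a - α • b = 0) :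
    (∃ v, (A₁ * A₂ - A₂ * A₁).mulVec v = a) ∧
    (∃ v, (A₁ * A₂ - A₂ * A₁).mulVec v = b) ∧
    LinearIndependent ℝ ![a, b] := by
  set C := A₁ * A₂ - A₂ * A₁ with hCdef
  have hCeq : C = Matrix.vecMulVec b a - Matrix.vecMulVec a b := by
    have h := heq1
    apply eq_of_sub_eq_zero
    rw [← h]; abel
  have hmv : ∀ v, C.mulVec v = (a ⬝ᵥ v) • b - (b ⬝ᵥ v) • a := by
    intro v
    rw [hCeq, Matrix.sub_mulVec, vecMulVec_mulVec', vecMulVec_mulVec']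
  -- range of mulVecLin C is contained in span {a, b}
  have hle : LinearMap.range C.mulVecLin ≤ Submodule.span ℝ (Set.range ![a, b]) := by
    rintro x ⟨v, rfl⟩
    rw [Matrix.mulVecLin_apply, hmv]
    have ha : a ∈ Set.range ![a, b] := ⟨0, rfl⟩
    have hb : b ∈ Set.range ![a, b] := ⟨1, rfl⟩
    exact sub_mem (Submodule.smul_mem _ _ (Submodule.subset_span hb))
      (Submodule.smul_mem _ _ (Submodule.subset_span ha))
  have hfr : Module.finrank ℝ (LinearMap.range C.mulVecLin) = 2 := hrank
  have hsple : Module.finrank ℝ (Submodule.span ℝ (Set.range ![a, b])) ≤ 2 := by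
    have := finrank_range_le_card (R := ℝ) ![a, b]
    simpa only [Set.finrank, Fintype.card_fin] using this
  have heqspan : LinearMap.range C.mulVecLin = Submodule.span ℝ (Set.range ![a, b]) := by
    apply Submodule.eq_of_le_of_finrank_le hle
    rw [hfr]; exact hsple
  have hmem : ∀ x ∈ Set.range ![a, b], ∃ v, C.mulVec v = x := by
    intro x hx
    have : x ∈ LinearMap.range C.mulVecLin := by
      rw [heqspan]; exact Submodule.subset_span hx
    obtain ⟨v, hv⟩ := this
    exact ⟨v, hv⟩
  refine ⟨hmem a ⟨0, rfl⟩, hmem b ⟨1, rfl⟩, ?_⟩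
  rw [linearIndependent_iff_card_eq_finrank_span]
  have : (Set.range ![a, b]).finrank ℝ = 2 := by
    rw [Set.finrank, ← heqspan, hfr]
  rw [this]
  simp
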